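/- arXiv:2311.12911 — 4 statements merged into one kernel-verified Lean document; each statement's English description precedes it below -/
import Mathlib

section
/- Let K be a totally real number field of degree d with discriminant Δ_K, and let I be a nonzero integral ideal of O_K. For every totally positive element α ∈ I with N(α) > Δ_K · N(I)², there exists a nonzero β ∈ I such that α − β² is totally positive. -/
set_option maxHeartbeats 1000000
open scoped nonZeroDivisors NNReal ENNReal
open NumberField NumberField.InfinitePlace NumberField.mixedEmbedding MeasureTheory Module


open NumberField

/-- `x ∈ K` is totally positive: every real embedding of `x` is positive. -/
def TotPos (K : Type*) [Field K] (x : K) : Prop := ∀ φ : K →+* ℝ, 0 < φ x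

/-- If `α ∈ I` is totally positive with `N(α) > Δ_K · N(I)²`, then there is a nonzero
`β ∈ I` with `α ≻ β²`. -/
theorem exists_sq_lt_of_norm_large
    (K : Type*) [Field K] [NumberField K]
    (hreal : ∀ v : InfinitePlace K, v.IsReal)
    (I : Ideal (𝓞 K)) (hI : I ≠ ⊥)
    (α : 𝓞 K) (hαI : α ∈ I) (hα : TotPos K (algebraMap (𝓞 K) K α))
    (hnorm : |(NumberField.discr K : ℚ)| * (Ideal.absNorm I : ℚ) ^ 2 <
      Algebra.norm ℚ (algebraMap (𝓞 K) K α)) :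
    ∃ β ∈ I, β ≠ 0 ∧
      ∀ φ : K →+* ℝ, φ (algebraMap (𝓞 K) K β) ^ 2 < φ (algebraMap (𝓞 K) K α) := by
  classical
  set αK := algebraMap (𝓞 K) K α with hαK
  haveI : IsEmpty {w : InfinitePlace K // IsComplex w} := by
    refine ⟨fun w => ?_⟩
    exact (not_isReal_iff_isComplex.mpr w.2) (hreal w.1)
  have hr2 : nrComplexPlaces K = 0 := Fintype.card_eq_zero
  have hr1 : nrRealPlaces K = finrank ℚ K := by
    have := card_add_two_mul_card_eq_rank K
    omega
  -- the fractional ideal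
  have hI' : (I : FractionalIdeal (𝓞 K)⁰ K) ≠ 0 := by
    simpa using hI
  set J : (FractionalIdeal (𝓞 K)⁰ K)ˣ := Units.mk0 _ hI' with hJ
  -- the norm is positive
  have hNpos : 0 < Algebra.norm ℚ αK := by
    refine lt_of_le_of_lt ?_ hnorm
    positivity
  have hwα : ∀ w : InfinitePlace K, 0 < w αK := fun w =>
    pos_iff.mpr (fun h => by simp [h] at hNpos)
  set f : InfinitePlace K → NNReal := fun w => Real.toNNReal (Real.sqrt (w αK)) with hf
  have hfr : ∀ w, (f w : ℝ) = Real.sqrt (w αK) := by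
    intro w; simp [hf, Real.coe_toNNReal _ (Real.sqrt_nonneg _)]
  have hmult : ∀ w : InfinitePlace K, mult w = 1 := fun w => by
    simp [mult, hreal w]
  -- key real inequality
  have key : (Ideal.absNorm I : ℝ) * Real.sqrt |(discr K : ℝ)| <
      ∏ w : InfinitePlace K, Real.sqrt (w αK) := by
    have h1 : (∏ w : InfinitePlace K, Real.sqrt (w αK)) ^ 2
        = ∏ w : InfinitePlace K, (w αK) := by
      rw [← Finset.prod_pow]
      exact Finset.prod_congr rfl fun w _ => Real.sq_sqrt (hwα w).le
    have h2 : ∏ w : InfinitePlace K, (w αK) = ((Algebra.norm ℚ αK : ℚ) : ℝ) := by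
      have hp := prod_eq_abs_norm αK
      simp_rw [hmult, pow_one] at hp
      rw [hp, abs_of_pos hNpos]
    refine lt_of_pow_lt_pow_left₀ 2 (Finset.prod_nonneg fun w _ => Real.sqrt_nonneg _) ?_
    rw [h1, h2, mul_pow, Real.sq_sqrt (abs_nonneg _)]
    have h3 := hnorm
    rw [mul_comm] at h3
    exact_mod_cast h3
  -- Minkowski condition
  have hmink : minkowskiBound K J < volume (convexBodyLT K f) := by
    rw [minkowskiBound, volume_fundamentalDomain_fractionalIdealLatticeBasis,
      volume_fundamentalDomain_latticeBasis, convexBodyLT_volume, hr2,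
      mixedEmbedding.finrank, convexBodyLTFactor, hr1, hr2]
    simp only [hJ, pow_zero, one_mul, mul_one, Units.val_mk0,
      FractionalIdeal.coeIdeal_absNorm]
    simp_rw [hmult, pow_one]
    have hcoe : ENNReal.ofReal ((Ideal.absNorm I : ℚ) : ℝ) =
        ((((Ideal.absNorm I : ℚ) : ℝ).toNNReal : ℝ≥0) : ℝ≥0∞) :=
      rfl
    have hnn : ((Ideal.absNorm I : ℚ) : ℝ).toNNReal * NNReal.sqrt ‖(discr K : ℤ)‖₊
        < ∏ w : InfinitePlace K, f w := by
      rw [← NNReal.coe_lt_coe, NNReal.coe_mul, NNReal.coe_prod,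
        Real.coe_toNNReal _ (by positivity), Real.coe_sqrt, coe_nnnorm, Int.norm_eq_abs]
      simp_rw [hfr]
      exact_mod_cast key
    calc ENNReal.ofReal ((Ideal.absNorm I : ℚ) : ℝ) * ↑(NNReal.sqrt ‖(discr K : ℤ)‖₊)
          * 2 ^ finrank ℚ K
        = ↑(((Ideal.absNorm I : ℚ) : ℝ).toNNReal * NNReal.sqrt ‖(discr K : ℤ)‖₊)
          * 2 ^ finrank ℚ K := by rw [hcoe, ENNReal.coe_mul]
      _ < ↑(∏ w : InfinitePlace K, f w) * 2 ^ finrank ℚ K := by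
          refine (ENNReal.mul_lt_mul_iff_left (by positivity) (by simp)).mpr ?_
          exact_mod_cast hnn
      _ = (((2 : ℝ≥0) ^ finrank ℚ K : ℝ≥0) : ℝ≥0∞) * ↑(∏ x : InfinitePlace K, f x) := by
          rw [mul_comm]
          norm_cast
  obtain ⟨a, haJ, ha0, hbd⟩ := exists_ne_zero_mem_ideal_lt K J hmink
  rw [hJ] at haJ
  simp only [Units.val_mk0] at haJ
  obtain ⟨β, hβI, rfl⟩ := (FractionalIdeal.mem_coeIdeal _).mp haJ
  refine ⟨β, hβI, fun h => ha0 (by simp [h]), fun φ => ?_⟩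
  set ψ : K →+* ℂ := (Complex.ofRealHom).comp φ
  have hw := hbd (InfinitePlace.mk ψ)
  rw [InfinitePlace.apply, hfr] at hw
  have hψ : ∀ x : K, ‖ψ x‖ = |φ x| := by
    intro x; simp [ψ]
  rw [hψ] at hw
  have hwa : (InfinitePlace.mk ψ) αK = φ αK := by
    rw [InfinitePlace.apply, hψ, abs_of_pos (hα φ)]
  rw [hwa] at hw
  calc φ (algebraMap (𝓞 K) K β) ^ 2 = |φ (algebraMap (𝓞 K) K β)| ^ 2 := by rw [sq_abs]
    _ < Real.sqrt (φ αK) ^ 2 := by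
        exact pow_lt_pow_left₀ hw (abs_nonneg _) two_ne_zero
    _ = φ αK := Real.sq_sqrt (hα φ).le
end

section
/- Let K be a totally real number field with discriminant Δ_K and I a nonzero integral ideal. If α ∈ I is totally positive and I-indecomposable (α cannot be written as β + γ with β, γ ∈ I both totally positive), then N(α) ≤ Δ_K · N(I)². -/
open NumberField

open scoped nonZeroDivisors in
open NumberField.InfinitePlace NumberField.mixedEmbedding MeasureTheory Module in
/-- An `I`-indecomposable totally positive element has norm at most `Δ_K · N(I)²`. -/
theorem norm_le_of_indecomposable
    (K : Type*) [Field K] [NumberField K]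
    (hreal : ∀ v : InfinitePlace K, v.IsReal)
    (I : Ideal (𝓞 K)) (hI : I ≠ ⊥)
    (α : 𝓞 K) (hαI : α ∈ I) (hα : TotPos K (algebraMap (𝓞 K) K α))
    (hind : ¬ ∃ β γ : 𝓞 K, β ∈ I ∧ γ ∈ I ∧
      TotPos K (algebraMap (𝓞 K) K β) ∧ TotPos K (algebraMap (𝓞 K) K γ) ∧ α = β + γ) :
    Algebra.norm ℚ (algebraMap (𝓞 K) K α) ≤
      |(NumberField.discr K : ℚ)| * (Ideal.absNorm I : ℚ) ^ 2 := by
  classical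
  by_contra hlt
  push_neg at hlt
  set αK := algebraMap (𝓞 K) K α with hαK
  -- basic numerology
  have hr2 : nrComplexPlaces K = 0 := by
    rw [nrComplexPlaces, Fintype.card_eq_zero_iff]
    exact ⟨fun w => (not_isReal_iff_isComplex.mpr w.2) (hreal w.1)⟩
  have hr1 : nrRealPlaces K = finrank ℚ K := by
    have := card_add_two_mul_card_eq_rank K
    omega
  have hmult : ∀ w : InfinitePlace K, mult w = 1 := fun w => by
    rw [mult, if_pos (hreal w)]
  -- the fractional ideal
  have hI0 : (I : FractionalIdeal (𝓞 K)⁰ K) ≠ 0 :=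
    (FractionalIdeal.coeIdeal_ne_zero).mpr hI
  set J : (FractionalIdeal (𝓞 K)⁰ K)ˣ := Units.mk0 _ hI0 with hJ
  -- the bounding function
  set f : InfinitePlace K → NNReal := fun w => NNReal.sqrt ((w αK).toNNReal) with hf
  have hfw : ∀ w : InfinitePlace K, (f w : ℝ) = Real.sqrt (w αK) := by
    intro w
    simp only [hf]
    rw [Real.coe_sqrt, Real.coe_toNNReal _ (apply_nonneg w _)]
  -- real inequality
  have habs : (0:ℝ) ≤ (|(discr K : ℚ)| * (Ideal.absNorm I : ℚ) ^ 2 : ℚ) := by positivity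
  have hlt' : ((|(discr K : ℚ)| * (Ideal.absNorm I : ℚ) ^ 2 : ℚ) : ℝ)
      < ((|Algebra.norm ℚ αK| : ℚ) : ℝ) := by
    calc ((|(discr K : ℚ)| * (Ideal.absNorm I : ℚ) ^ 2 : ℚ) : ℝ)
        < ((Algebra.norm ℚ αK : ℚ) : ℝ) := by exact_mod_cast hlt
      _ ≤ ((|Algebra.norm ℚ αK| : ℚ) : ℝ) := by exact_mod_cast le_abs_self _
  have key : (Ideal.absNorm I : ℝ) * Real.sqrt |(discr K : ℤ)|
      < ∏ w : InfinitePlace K, Real.sqrt (w αK) := by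
    have h2 : (∏ w : InfinitePlace K, Real.sqrt (w αK)) ^ 2
        = ((|Algebra.norm ℚ αK| : ℚ) : ℝ) := by
      rw [← prod_eq_abs_norm, ← Finset.prod_pow]
      refine Finset.prod_congr rfl fun w _ => ?_
      rw [Real.sq_sqrt (apply_nonneg w _), hmult w, pow_one]
    have h1 : ((Ideal.absNorm I : ℝ) * Real.sqrt |(discr K : ℤ)|) ^ 2
        = ((|(discr K : ℚ)| * (Ideal.absNorm I : ℚ) ^ 2 : ℚ) : ℝ) := by
      rw [mul_pow, Real.sq_sqrt (abs_nonneg _)]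
      push_cast
      ring
    refine lt_of_pow_lt_pow_left₀ 2 (Finset.prod_nonneg fun w _ => Real.sqrt_nonneg _) ?_
    rw [h1, h2]
    exact hlt'
  -- the Minkowski bound condition
  have hvol_ne_top : volume (convexBodyLT K f) ≠ ⊤ := by
    rw [convexBodyLT_volume]
    exact ENNReal.mul_ne_top ENNReal.coe_ne_top ENNReal.coe_ne_top
  have hmb : minkowskiBound K J < volume (convexBodyLT K f) := by
    rw [← ENNReal.toReal_lt_toReal (minkowskiBound_lt_top K J).ne hvol_ne_top]
    have hTV : (volume (convexBodyLT K f)).toReal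
        = 2 ^ finrank ℚ K * ∏ w : InfinitePlace K, Real.sqrt (w αK) := by
      rw [convexBodyLT_volume, ENNReal.toReal_mul, ENNReal.coe_toReal, ENNReal.coe_toReal,
        NNReal.coe_prod]
      congr 1
      · rw [convexBodyLTFactor, NNReal.coe_mul, NNReal.coe_pow, NNReal.coe_pow, hr1, hr2,
          pow_zero, mul_one, NNReal.coe_ofNat]
      · refine Finset.prod_congr rfl fun w _ => ?_
        rw [hmult w, pow_one, hfw w]
    have hTM : (minkowskiBound K J).toReal
        = (Ideal.absNorm I : ℝ) * Real.sqrt |(discr K : ℤ)| * 2 ^ finrank ℚ K := by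
      simp only [minkowskiBound, volume_fundamentalDomain_fractionalIdealLatticeBasis,
        volume_fundamentalDomain_latticeBasis, ENNReal.toReal_mul, ENNReal.toReal_pow,
        ENNReal.toReal_inv, ENNReal.toReal_ofNat, ENNReal.coe_toReal,
        ENNReal.toReal_ofReal (Rat.cast_nonneg.mpr (FractionalIdeal.absNorm_nonneg J.1)),
        hr2, pow_zero, one_mul, mixedEmbedding.finrank]
      rw [hJ, Units.val_mk0, FractionalIdeal.coeIdeal_absNorm, Real.coe_sqrt, coe_nnnorm,
        Int.norm_eq_abs]
      push_cast
      ring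
    rw [hTV, hTM]
    calc (Ideal.absNorm I : ℝ) * Real.sqrt |(discr K : ℤ)| * 2 ^ finrank ℚ K
        < (∏ w : InfinitePlace K, Real.sqrt (w αK)) * 2 ^ finrank ℚ K :=
          mul_lt_mul_of_pos_right key (by positivity)
      _ = 2 ^ finrank ℚ K * ∏ w : InfinitePlace K, Real.sqrt (w αK) := mul_comm _ _
  -- apply Minkowski
  obtain ⟨a, haI, ha0, haf⟩ := exists_ne_zero_mem_ideal_lt K J hmb
  rw [hJ, Units.val_mk0, FractionalIdeal.mem_coeIdeal] at haI
  obtain ⟨β, hβI, rfl⟩ := haI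
  have hβ0 : β ≠ 0 := fun h => ha0 (by simp [h])
  -- the decomposition
  have hsq : ∀ φ : K →+* ℝ, (φ (algebraMap (𝓞 K) K β)) ^ 2 < φ αK := by
    intro φ
    set ψ : K →+* ℂ := Complex.ofRealHom.comp φ with hψ
    have hwx : ∀ x : K, (InfinitePlace.mk ψ) x = |φ x| := fun x => by
      rw [InfinitePlace.apply, hψ, RingHom.comp_apply, Complex.ofRealHom_eq_coe,
        Complex.norm_real, Real.norm_eq_abs]
    have h1 := haf (InfinitePlace.mk ψ)
    rw [hwx, hfw] at h1
    have hwa : (InfinitePlace.mk ψ) αK = φ αK := by rw [hwx, abs_of_pos (hα φ)]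
    rw [hwa] at h1
    calc (φ (algebraMap (𝓞 K) K β)) ^ 2 = |φ (algebraMap (𝓞 K) K β)| ^ 2 := (sq_abs _).symm
      _ < Real.sqrt (φ αK) ^ 2 := by
          exact pow_lt_pow_left₀ h1 (abs_nonneg _) two_ne_zero
      _ = φ αK := Real.sq_sqrt (hα φ).le
  have hβK0 : algebraMap (𝓞 K) K β ≠ 0 := by
    simpa using (map_ne_zero_iff _ (NumberField.RingOfIntegers.coe_injective)).mpr hβ0
  refine hind ⟨β * β, α - β * β, Ideal.mul_mem_left I β hβI, Ideal.sub_mem I hαI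
    (Ideal.mul_mem_left I β hβI), ?_, ?_, by ring⟩
  · intro φ
    rw [map_mul, map_mul]
    exact mul_self_pos.mpr fun h => hβK0 ((map_eq_zero φ).mp h)
  · intro φ
    have h := hsq φ
    rw [sq] at h
    rw [map_sub, map_mul, map_sub, map_mul, sub_pos]
    exact h
end

section
/- Let K be a totally real number field and I a nonzero fractional ideal of O_K. Then κ(I) is finite; in fact κ(I) is at most the number of orbits of I-indecomposable elements under multiplication by totally positive units of O_K, and this number of orbits is finite. -/
open NumberField Pointwise nonZeroDivisors

/-- The totally positive integers of `K`, together with `0`, viewed inside `K`. -/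
def OPos (K : Type*) [Field K] [NumberField K] : Set K :=
  {x | (∃ y : 𝓞 K, algebraMap (𝓞 K) K y = x) ∧ (x = 0 ∨ TotPos K x)}

/-- The totally positive part of a subset `I ⊆ K`, together with `0` (i.e. `I^{+,0}`). -/
def IdealPos (K : Type*) [Field K] (I : Set K) : Set K := {x ∈ I | x = 0 ∨ TotPos K x}

/-- `κ(I)`: the least `n` such that `I^{+,0} = α₁𝓞⁺⁰ + ⋯ + αₙ𝓞⁺⁰` with each `αᵢ`
totally positive (`⊤` if no such `n` exists). -/
noncomputable def kappa (K : Type*) [Field K] [NumberField K] (I : Set K) : ℕ∞ :=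
  sInf ((↑) '' {n : ℕ | ∃ f : Fin n → K, (∀ i, TotPos K (f i)) ∧
    IdealPos K I = ∑ i : Fin n, (f i * ·) '' OPos K})

/-- `a` is an `I`-indecomposable. -/
def Indec (K : Type*) [Field K] (I : Set K) (a : K) : Prop :=
  a ∈ I ∧ TotPos K a ∧
    ¬ ∃ β γ : K, β ∈ I ∧ γ ∈ I ∧ TotPos K β ∧ TotPos K γ ∧ a = β + γ

/-- The relation identifying `I`-indecomposables that differ by a totally positive unit. -/
def UnitRel (K : Type*) [Field K] [NumberField K] (I : Set K)
    (a b : {x : K // Indec K I x}) : Prop :=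
  ∃ u : (𝓞 K)ˣ, TotPos K (algebraMap (𝓞 K) K u) ∧ b.1 = a.1 * algebraMap (𝓞 K) K u

section Helpers

variable {K : Type*} [Field K] [NumberField K]

open NumberField.InfinitePlace

lemma exists_place_of_realEmbedding (φ : K →+* ℝ) :
    ∃ (w : InfinitePlace K) (hw : w.IsReal), embedding_of_isReal hw = φ := by
  have hψ : ComplexEmbedding.IsReal (Complex.ofRealHom.comp φ) := by
    rw [ComplexEmbedding.isReal_iff]
    ext x
    simp [ComplexEmbedding.conjugate_coe_eq, Complex.conj_ofReal]
  refine ⟨InfinitePlace.mk (Complex.ofRealHom.comp φ), isReal_mk_iff.mpr hψ, ?_⟩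
  ext x
  apply Complex.ofReal_injective
  rw [embedding_of_isReal_apply, embedding_mk_eq_of_isReal hψ]
  rfl

lemma totPos_iff (x : K) :
    TotPos K x ↔ ∀ (w : InfinitePlace K) (hw : w.IsReal), 0 < embedding_of_isReal hw x := by
  constructor
  · intro h w hw; exact h _
  · intro h φ
    obtain ⟨w, hw, rfl⟩ := exists_place_of_realEmbedding φ
    exact h w hw

end Helpers

section Sign

variable {K : Type*} [Field K] [NumberField K]

open NumberField.InfinitePlace NumberField.mixedEmbedding Module Bornology
open scoped Classical

lemma exists_sign_multiplier (hreal : ∀ v : InfinitePlace K, v.IsReal) :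
    ∃ M : ℝ, 1 ≤ M ∧ ∀ a : K, a ≠ 0 →
      ∃ θ : 𝓞 K, TotPos K ((algebraMap (𝓞 K) K θ) * a) ∧
        ∀ φ : K →+* ℝ, |φ (algebraMap (𝓞 K) K θ)| ≤ M := by
  have hfb := ZSpan.fundamentalDomain_isBounded (latticeBasis K)
  obtain ⟨R, hR⟩ := hfb.exists_norm_le
  refine ⟨2 * |R| + 1, by linarith [abs_nonneg R], fun a ha => ?_⟩
  set x : mixedSpace K :=
    ⟨fun w => if 0 < embedding_of_isReal w.2 a then |R| + 1 else -(|R| + 1), 0⟩ with hx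
  obtain ⟨v, hv, -⟩ := ZSpan.exist_unique_vadd_mem_fundamentalDomain (latticeBasis K) (-x)
  have hvx : ‖(v : mixedSpace K) - x‖ ≤ |R| := by
    have h0 : ‖(v : mixedSpace K) + -x‖ ≤ R := hR _ hv
    rw [← sub_eq_add_neg] at h0
    exact h0.trans (le_abs_self R)
  obtain ⟨θ, hθ⟩ : ∃ θ : 𝓞 K, mixedEmbedding K (algebraMap (𝓞 K) K θ) = v := by
    have hmem := (mem_span_latticeBasis K).mp v.2
    obtain ⟨θ, hθ⟩ := hmem
    exact ⟨θ, hθ⟩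
  have hx1 : ∀ (w : InfinitePlace K) (hw : w.IsReal),
      x.1 ⟨w, hw⟩ = if 0 < embedding_of_isReal hw a then |R| + 1 else -(|R| + 1) := by
    intro w hw; rfl
  have hcoord : ∀ (w : InfinitePlace K) (hw : w.IsReal),
      |embedding_of_isReal hw (algebraMap (𝓞 K) K θ) - x.1 ⟨w, hw⟩| ≤ |R| := by
    intro w hw
    have h1 : ‖((v : mixedSpace K) - x).1‖ ≤ ‖(v : mixedSpace K) - x‖ := norm_fst_le _
    have h2 : ‖((v : mixedSpace K) - x).1 ⟨w, hw⟩‖ ≤ ‖((v : mixedSpace K) - x).1‖ :=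
      norm_le_pi_norm _ _
    have h3 := (h2.trans h1).trans hvx
    rw [Real.norm_eq_abs] at h3
    have h4 : ((v : mixedSpace K) - x).1 ⟨w, hw⟩
        = embedding_of_isReal hw (algebraMap (𝓞 K) K θ) - x.1 ⟨w, hw⟩ := by
      rw [← hθ]
      simp [mixedEmbedding_apply_isReal]
    rwa [h4] at h3
  refine ⟨θ, ?_, ?_⟩
  · intro φ
    obtain ⟨w, hw, rfl⟩ := exists_place_of_realEmbedding φ
    have hc := hcoord w hw
    rw [hx1 w hw] at hc
    have hφa : embedding_of_isReal hw a ≠ 0 := (map_ne_zero (embedding_of_isReal hw)).mpr ha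
    rw [map_mul]
    rcases lt_or_gt_of_ne hφa with hneg | hpos
    · rw [if_neg (not_lt.mpr hneg.le)] at hc
      have h5 := abs_le.mp hc
      exact mul_pos_of_neg_of_neg (by linarith [h5.1, h5.2]) hneg
    · rw [if_pos hpos] at hc
      have h5 := abs_le.mp hc
      exact mul_pos (by linarith [h5.1, h5.2]) hpos
  · intro φ
    obtain ⟨w, hw, rfl⟩ := exists_place_of_realEmbedding φ
    have hc := hcoord w hw
    have hxb : |x.1 ⟨w, hw⟩| ≤ |R| + 1 := by
      rw [hx1 w hw]
      rcases lt_or_ge 0 (embedding_of_isReal hw a) with h | h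
      · rw [if_pos h, abs_of_nonneg (by positivity)]
      · rw [if_neg (not_lt.mpr h), abs_neg, abs_of_nonneg (by positivity)]
    calc |embedding_of_isReal hw (algebraMap (𝓞 K) K θ)|
        ≤ |embedding_of_isReal hw (algebraMap (𝓞 K) K θ) - x.1 ⟨w, hw⟩| + |x.1 ⟨w, hw⟩| := by
          simpa using abs_add_le (embedding_of_isReal hw (algebraMap (𝓞 K) K θ) - x.1 ⟨w, hw⟩)
            (x.1 ⟨w, hw⟩)
      _ ≤ |R| + (|R| + 1) := add_le_add hc hxb
      _ = 2 * |R| + 1 := by ring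

end Sign

section NormBound

variable {K : Type*} [Field K] [NumberField K]

open NumberField.InfinitePlace NumberField.mixedEmbedding FractionalIdeal
open scoped Classical

lemma norm_bound_of_indec (hreal : ∀ v : InfinitePlace K, v.IsReal)
    (I : FractionalIdeal (𝓞 K)⁰ K) (hI : I ≠ 0) :
    ∃ C : ℝ, 0 ≤ C ∧ ∀ α : K, Indec K ((I : Submodule (𝓞 K) K) : Set K) α →
      |((Algebra.norm ℚ α : ℚ) : ℝ)| ≤ C := by
  obtain ⟨M, hM1, hMs⟩ := exists_sign_multiplier (K := K) hreal
  have hM0 : (0:ℝ) < M := lt_of_lt_of_le one_pos hM1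
  set IU : (FractionalIdeal (𝓞 K)⁰ K)ˣ := Units.mk0 I hI with hIU
  set B : NNReal := (minkowskiBound K IU).toNNReal with hBdef
  have hB : minkowskiBound K IU ≤ (B : ENNReal) :=
    le_of_eq (ENNReal.coe_toNNReal (minkowskiBound_lt_top K IU).ne).symm
  set r : ℕ := Fintype.card (InfinitePlace K) with hr
  have hcompl : IsEmpty {w : InfinitePlace K // w.IsComplex} :=
    ⟨fun w => (not_isReal_iff_isComplex.mpr w.2) (hreal w.1)⟩
  have hr1 : nrRealPlaces K = r := by
    rw [nrRealPlaces, hr]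
    exact Fintype.card_congr (Equiv.subtypeUnivEquiv hreal)
  have hr2 : nrComplexPlaces K = 0 := by
    rw [nrComplexPlaces]
    exact Fintype.card_eq_zero
  have hMr : (0:ℝ) < M ^ r := pow_pos hM0 r
  refine ⟨M ^ r * ((B : ℝ) + 1),
    mul_nonneg hMr.le (by linarith [B.coe_nonneg]), fun α hα => ?_⟩
  by_contra hbig
  push_neg at hbig
  obtain ⟨hαS, hαpos, hαnd⟩ := hα
  have hφα : ∀ (w : InfinitePlace K), 0 < embedding_of_isReal (hreal w) α := fun w =>
    hαpos _
  set f : InfinitePlace K → NNReal :=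
    fun w => Real.toNNReal (embedding_of_isReal (hreal w) α / (2 * M)) with hf
  have hfval : ∀ w, ((f w : ℝ)) = embedding_of_isReal (hreal w) α / (2 * M) := by
    intro w
    rw [hf]
    exact Real.coe_toNNReal _ (le_of_lt (div_pos (hφα w) (by linarith)))
  have hNα : |((Algebra.norm ℚ α : ℚ) : ℝ)| = ∏ w : InfinitePlace K,
      embedding_of_isReal (hreal w) α := by
    rw [← Rat.cast_abs, ← prod_eq_abs_norm]
    refine Finset.prod_congr rfl fun w _ => ?_
    rw [mult, if_pos (hreal w), pow_one, ← norm_embedding_of_isReal (hreal w),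
      Real.norm_eq_abs, abs_of_pos (hφα w)]
  have hm1 : ∀ w : InfinitePlace K, mult w = 1 := fun w => by rw [mult, if_pos (hreal w)]
  have hvol : minkowskiBound K IU < MeasureTheory.volume (convexBodyLT K f) := by
    rw [convexBodyLT_volume]
    refine lt_of_le_of_lt hB ?_
    simp_rw [hm1, pow_one]
    rw [← ENNReal.coe_mul, ENNReal.coe_lt_coe, ← NNReal.coe_lt_coe]
    have h2 : ((convexBodyLTFactor K * ∏ w, f w : NNReal) : ℝ)
        = 2 ^ r * ∏ w, (f w : ℝ) := by
      push_cast [convexBodyLTFactor, hr1, hr2]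
      norm_num
    rw [h2]
    have h3 : ∏ w, (f w : ℝ) = |((Algebra.norm ℚ α : ℚ) : ℝ)| / (2 * M) ^ r := by
      simp_rw [hfval]
      rw [Finset.prod_div_distrib, hNα, Finset.prod_const, Finset.card_univ, hr]
    have h4 : (0:ℝ) < (2 * M) ^ r := by positivity
    have key : (2:ℝ) ^ r * (|((Algebra.norm ℚ α : ℚ) : ℝ)| / (2 * M) ^ r)
        = |((Algebra.norm ℚ α : ℚ) : ℝ)| / M ^ r := by
      rw [mul_pow]
      field_simp
    rw [h3, key, lt_div_iff₀ hMr]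
    nlinarith [B.coe_nonneg, hbig, hMr]
  obtain ⟨a, haI, ha0, haw⟩ := exists_ne_zero_mem_ideal_lt K IU hvol
  obtain ⟨θ, hθpos, hθbd⟩ := hMs a ha0
  have haIS : a ∈ ((I : Submodule (𝓞 K) K) : Set K) := by
    rw [SetLike.mem_coe]
    exact mem_coe.mpr haI
  have hβS : (algebraMap (𝓞 K) K θ) * a ∈ ((I : Submodule (𝓞 K) K) : Set K) := by
    rw [SetLike.mem_coe, ← Algebra.smul_def]
    exact Submodule.smul_mem _ θ haIS
  have hsmall : ∀ φ : K →+* ℝ, |φ ((algebraMap (𝓞 K) K θ) * a)| < φ α / 2 := by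
    intro φ
    obtain ⟨w, hw, rfl⟩ := exists_place_of_realEmbedding φ
    have h7 : |embedding_of_isReal hw a| < embedding_of_isReal hw α / (2 * M) := by
      have h8 := haw w
      rw [← norm_embedding_of_isReal hw, Real.norm_eq_abs] at h8
      exact lt_of_lt_of_le h8 (le_of_eq (hfval w))
    rw [_root_.map_mul, abs_mul]
    calc |embedding_of_isReal hw (algebraMap (𝓞 K) K θ)| * |embedding_of_isReal hw a|
        ≤ M * |embedding_of_isReal hw a| :=
          mul_le_mul_of_nonneg_right (hθbd _) (abs_nonneg _)
      _ < M * (embedding_of_isReal hw α / (2 * M)) := (mul_lt_mul_iff_right₀ hM0).mpr h7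
      _ = embedding_of_isReal hw α / 2 := by field_simp
  refine hαnd ⟨(algebraMap (𝓞 K) K θ) * a, α - (algebraMap (𝓞 K) K θ) * a, hβS, ?_, hθpos, ?_, ?_⟩
  · exact Submodule.sub_mem _ hαS hβS
  · intro φ
    have h11 := abs_lt.mp (hsmall φ)
    have h12 : 0 < φ α := hαpos φ
    rw [_root_.map_sub]
    linarith [h11.1, h11.2]
  · ring

end NormBound

section Algebraic

variable {K : Type*} [Field K] [NumberField K]

open NumberField.InfinitePlace

lemma totPos_mul {x y : K} (hx : TotPos K x) (hy : TotPos K y) : TotPos K (x * y) :=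
  fun φ => by rw [map_mul]; exact mul_pos (hx φ) (hy φ)

lemma totPos_add {x y : K} (hx : TotPos K x) (hy : TotPos K y) : TotPos K (x + y) :=
  fun φ => by rw [map_add]; exact add_pos (hx φ) (hy φ)

lemma unitRel_equivalence (I : Set K) : Equivalence (UnitRel K I) := by
  constructor
  · intro a
    exact ⟨1, fun φ => by simp, by simp⟩
  · rintro a b ⟨u, hu, hab⟩
    refine ⟨u⁻¹, fun φ => ?_, ?_⟩
    · have h1 : φ (algebraMap (𝓞 K) K ↑u) * φ (algebraMap (𝓞 K) K ↑u⁻¹) = 1 := by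
        rw [← _root_.map_mul, ← _root_.map_mul, Units.mul_inv, _root_.map_one, _root_.map_one]
      have h2 := hu φ
      nlinarith
    · rw [hab, mul_assoc, ← _root_.map_mul, Units.mul_inv, _root_.map_one, mul_one]
  · rintro a b c ⟨u, hu, hab⟩ ⟨v, hv, hbc⟩
    refine ⟨u * v, fun φ => ?_, ?_⟩
    · rw [Units.val_mul, _root_.map_mul, _root_.map_mul]
      exact mul_pos (hu φ) (hv φ)
    · rw [hbc, hab, mul_assoc, Units.val_mul, _root_.map_mul]

lemma totPos_trace_pos (hreal : ∀ v : InfinitePlace K, v.IsReal) {x : K}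
    (hx : TotPos K x) : 0 < Algebra.trace ℚ K x := by
  have h := trace_eq_sum_embeddings (K := ℚ) (L := K) (E := ℂ) (x := x)
  have hcard : 0 < Fintype.card (K →ₐ[ℚ] ℂ) := by
    rw [AlgHom.card]
    exact Module.finrank_pos
  have hne : Nonempty (K →ₐ[ℚ] ℂ) := Fintype.card_pos_iff.mp hcard
  have hre : ∀ σ : K →ₐ[ℚ] ℂ, 0 < (σ x).re ∧ (σ x).im = 0 := by
    intro σ
    have hψ : NumberField.ComplexEmbedding.IsReal (σ.toRingHom : K →+* ℂ) :=
      isReal_of_mk_isReal (hreal (InfinitePlace.mk (σ.toRingHom : K →+* ℂ)))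
    have hc : ((NumberField.ComplexEmbedding.IsReal.embedding hψ x : ℝ) : ℂ) = σ x :=
      NumberField.ComplexEmbedding.IsReal.coe_embedding_apply hψ x
    constructor
    · rw [← hc, Complex.ofReal_re]
      exact hx (NumberField.ComplexEmbedding.IsReal.embedding hψ)
    · rw [← hc]
      exact Complex.ofReal_im _
  have him : 0 < (algebraMap ℚ ℂ (Algebra.trace ℚ K x)).re := by
    rw [h, Complex.re_sum]
    exact Finset.sum_pos (fun σ _ => (hre σ).1) Finset.univ_nonempty
  have : algebraMap ℚ ℂ (Algebra.trace ℚ K x) = ((Algebra.trace ℚ K x : ℚ) : ℂ) := by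
    norm_cast
  rw [this] at him
  simp only [Complex.ratCast_re] at him
  exact_mod_cast him

lemma trace_integer (x : 𝓞 K) :
    ∃ m : ℤ, (m : ℚ) = Algebra.trace ℚ K (algebraMap (𝓞 K) K x) := by
  have hint : IsIntegral ℤ (Algebra.trace ℚ K (algebraMap (𝓞 K) K x)) :=
    Algebra.isIntegral_trace (NumberField.RingOfIntegers.isIntegral_coe x)
  obtain ⟨m, hm⟩ := IsIntegrallyClosed.isIntegral_iff.mp hint
  exact ⟨m, hm⟩

end Algebraic

/-- `κ(I)` is finite: it is bounded by the (finite) number of orbits of `I`-indecomposables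
under multiplication by totally positive units. -/
theorem kappa_le_card_indec_orbits
    (K : Type*) [Field K] [NumberField K]
    (hreal : ∀ v : InfinitePlace K, v.IsReal)
    (I : FractionalIdeal (𝓞 K)⁰ K) (hI : I ≠ 0) :
    Finite (Quot (UnitRel K ((I : Submodule (𝓞 K) K) : Set K))) ∧
      kappa K ((I : Submodule (𝓞 K) K) : Set K) ≤
        (Nat.card (Quot (UnitRel K ((I : Submodule (𝓞 K) K) : Set K))) : ℕ∞) := by
  classical
  set S : Set K := ((I : Submodule (𝓞 K) K) : Set K) with hSdef
  obtain ⟨d, hdmem, hd⟩ := I.isFractional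
  have hinj : Function.Injective (algebraMap (𝓞 K) K) := IsFractionRing.injective (𝓞 K) K
  have hdK : algebraMap (𝓞 K) K d ≠ 0 := by
    intro h
    exact nonZeroDivisors.ne_zero hdmem (hinj (by rw [h, map_zero]))
  have hnum : ∀ x ∈ S, ∃ c : 𝓞 K, algebraMap (𝓞 K) K c = algebraMap (𝓞 K) K d * x := by
    intro x hx
    obtain ⟨c, hc⟩ := hd x hx
    exact ⟨c, by rw [hc, Algebra.smul_def]⟩
  -- Part 1 : finiteness
  obtain ⟨C, hC0, hCb⟩ := norm_bound_of_indec hreal I hI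
  set Cnat : ℕ := ⌊|((Algebra.norm ℚ (algebraMap (𝓞 K) K d) : ℚ) : ℝ)| * C⌋₊ with hCnat
  set ds : {x : K // Indec K S x} → 𝓞 K := fun a => (hnum a.1 a.2.1).choose with hds
  have hdsval : ∀ a : {x : K // Indec K S x},
      algebraMap (𝓞 K) K (ds a) = algebraMap (𝓞 K) K d * a.1 :=
    fun a => (hnum a.1 a.2.1).choose_spec
  set F0 : {x : K // Indec K S x} → Ideal (𝓞 K) := fun a => Ideal.span {ds a} with hF0
  have hwd : ∀ a b, UnitRel K S a b → F0 a = F0 b := by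
    rintro a b ⟨u, hu, hab⟩
    have h1 : ds b = ds a * u := by
      apply hinj
      rw [hdsval b, hab, _root_.map_mul, hdsval a, mul_assoc]
    show Ideal.span {ds a} = Ideal.span {ds b}
    exact Ideal.span_singleton_eq_span_singleton.mpr ⟨u, h1.symm⟩
  set F : Quot (UnitRel K S) → Ideal (𝓞 K) := Quot.lift F0 hwd with hF
  have hFinj : Function.Injective F := by
    intro q1 q2
    induction q1 using Quot.ind with | _ a =>
    induction q2 using Quot.ind with | _ b =>
    intro h
    obtain ⟨u, hu⟩ := Ideal.span_singleton_eq_span_singleton.mp h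
    apply Quot.sound
    have hba : b.1 = a.1 * algebraMap (𝓞 K) K u := by
      apply mul_left_cancel₀ hdK
      rw [← hdsval b, ← hu, _root_.map_mul, hdsval a, mul_assoc]
    refine ⟨u, fun φ => ?_, hba⟩
    have hb := b.2.2.1 φ
    rw [hba, _root_.map_mul] at hb
    rcases mul_pos_iff.mp hb with ⟨_, h2⟩ | ⟨h1, _⟩
    · exact h2
    · exact absurd (a.2.2.1 φ) (not_lt.mpr h1.le)
  have hbound : ∀ a : {x : K // Indec K S x}, Ideal.absNorm (F0 a) ≤ Cnat := by
    intro a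
    rw [hF0, Ideal.absNorm_span_singleton]
    rw [hCnat]
    apply Nat.le_floor
    have h2 : (((Algebra.norm ℤ (ds a)).natAbs : ℕ) : ℝ)
        = |((Algebra.norm ℚ (algebraMap (𝓞 K) K (ds a)) : ℚ) : ℝ)| := by
      have hc := Algebra.coe_norm_int (ds a)
      have h2a : ((Algebra.norm ℤ (ds a) : ℤ) : ℝ)
          = ((Algebra.norm ℚ (algebraMap (𝓞 K) K (ds a)) : ℚ) : ℝ) := by
        rw [← hc]
        push_cast
        rfl
      rw [Nat.cast_natAbs, Int.cast_abs, h2a]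
    have h3 : |((Algebra.norm ℚ (algebraMap (𝓞 K) K (ds a)) : ℚ) : ℝ)|
        = |((Algebra.norm ℚ (algebraMap (𝓞 K) K d) : ℚ) : ℝ)|
          * |((Algebra.norm ℚ a.1 : ℚ) : ℝ)| := by
      rw [hdsval a, _root_.map_mul]
      push_cast
      rw [abs_mul]
    have h4 := hCb a.1 a.2
    have h5 := mul_le_mul_of_nonneg_left h4 (abs_nonneg
      ((Algebra.norm ℚ (algebraMap (𝓞 K) K d) : ℚ) : ℝ))
    calc (((Algebra.norm ℤ (ds a)).natAbs : ℕ) : ℝ) = _ := h2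
      _ ≤ _ := by rw [h3]; exact h5
  have hfin : Finite (Quot (UnitRel K S)) := by
    have hTfin : Set.Finite {J : Ideal (𝓞 K) | Ideal.absNorm J ≤ Cnat} := by
      have hsub : {J : Ideal (𝓞 K) | Ideal.absNorm J ≤ Cnat} ⊆
          ⋃ n ∈ Finset.range (Cnat + 1), {J : Ideal (𝓞 K) | Ideal.absNorm J = n} := by
        intro J hJ
        simp only [Set.mem_iUnion, Finset.mem_range]
        exact ⟨Ideal.absNorm J, Nat.lt_succ_of_le hJ, rfl⟩
      exact Set.Finite.subset (Set.Finite.biUnion (Finset.range _).finite_toSet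
        (fun n _ => Ideal.finite_setOf_absNorm_eq n)) hsub
    haveI := hTfin.to_subtype
    refine Finite.of_injective (fun q => (⟨F q, ?_⟩ :
      {J : Ideal (𝓞 K) | Ideal.absNorm J ≤ Cnat})) ?_
    · induction q using Quot.ind with | _ a => exact hbound a
    · intro q1 q2 h
      exact hFinj (congrArg Subtype.val h)
  refine ⟨hfin, ?_⟩
  -- Part 2 : the kappa bound
  haveI := hfin
  set n : ℕ := Nat.card (Quot (UnitRel K S)) with hn
  set e : Quot (UnitRel K S) ≃ Fin n := Finite.equivFin _ with he
  set g : Fin n → K := fun i => ((e.symm i).out).1 with hg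
  have hgind : ∀ i, Indec K S (g i) := fun i => ((e.symm i).out).2
  set RHS : Set K := ∑ i : Fin n, (g i * ·) '' OPos K with hRHS
  have hzero_mem : ∀ i : Fin n, (0 : K) ∈ (g i * ·) '' OPos K :=
    fun i => ⟨0, ⟨⟨0, map_zero _⟩, Or.inl rfl⟩, mul_zero _⟩
  have hOadd : ∀ {z z' : K}, z ∈ OPos K → z' ∈ OPos K → z + z' ∈ OPos K := by
    rintro z z' ⟨⟨c, hc⟩, hz⟩ ⟨⟨c', hc'⟩, hz'⟩
    refine ⟨⟨c + c', by rw [map_add, hc, hc']⟩, ?_⟩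
    rcases hz with rfl | hz
    · rcases hz' with rfl | hz'
      · exact Or.inl (by ring)
      · exact Or.inr (by simpa using hz')
    · rcases hz' with rfl | hz'
      · exact Or.inr (by simpa using hz)
      · exact Or.inr (totPos_add hz hz')
  have hRadd : ∀ {x y : K}, x ∈ RHS → y ∈ RHS → x + y ∈ RHS := by
    intro x y hx hy
    rw [hRHS, Set.mem_fintype_sum] at hx hy ⊢
    obtain ⟨t, ht, rfl⟩ := hx
    obtain ⟨t', ht', rfl⟩ := hy
    refine ⟨fun i => t i + t' i, fun i => ?_, by rw [← Finset.sum_add_distrib]⟩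
    obtain ⟨z, hz, hzv⟩ := ht i
    obtain ⟨z', hz', hzv'⟩ := ht' i
    refine ⟨z + z', hOadd hz hz', ?_⟩
    show g i * (z + z') = t i + t' i
    rw [mul_add, show g i * z = t i from hzv, show g i * z' = t' i from hzv']
  have hzeroR : (0 : K) ∈ RHS := by
    rw [hRHS, Set.mem_fintype_sum]
    exact ⟨fun _ => 0, fun i => hzero_mem i, by simp⟩
  have hindecR : ∀ x : K, Indec K S x → x ∈ RHS := by
    intro x hx
    set q : Quot (UnitRel K S) := Quot.mk _ ⟨x, hx⟩ with hq
    set i : Fin n := e q with hi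
    have houteq : Quot.mk (UnitRel K S) (e.symm i).out = Quot.mk (UnitRel K S) ⟨x, hx⟩ := by
      rw [hi, Equiv.symm_apply_apply, Quot.out_eq, hq]
    have hrel : UnitRel K S (e.symm i).out ⟨x, hx⟩ :=
      ((unitRel_equivalence S).eqvGen_iff).mp (Quot.eq.mp houteq)
    obtain ⟨u, hu, hxu⟩ := hrel
    rw [hRHS, Set.mem_fintype_sum]
    refine ⟨fun j => if j = i then x else 0, fun j => ?_, by rw [Finset.sum_ite_eq' Finset.univ i]; simp⟩
    by_cases hj : j = i
    · have hjj : (fun j => if j = i then x else (0:K)) j = x := by simp [hj]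
      rw [hjj, hj]
      exact ⟨algebraMap (𝓞 K) K u, ⟨⟨u, rfl⟩, Or.inr hu⟩, hxu.symm⟩
    · have hjj : (fun j => if j = i then x else (0:K)) j = 0 := by simp [hj]
      rw [hjj]
      exact hzero_mem j
  have hddpos : ∀ {x : K}, TotPos K x → TotPos K (algebraMap (𝓞 K) K (d * d) * x) := by
    intro x hx φ
    have hφd : φ (algebraMap (𝓞 K) K d) ≠ 0 := (map_ne_zero φ).mpr hdK
    have h2 : 0 < φ (algebraMap (𝓞 K) K d) * φ (algebraMap (𝓞 K) K d) :=
      mul_self_pos.mpr hφd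
    have h3 := hx φ
    simp only [_root_.map_mul]
    nlinarith
  have hnum2 : ∀ x ∈ S, ∃ c : 𝓞 K, algebraMap (𝓞 K) K c = algebraMap (𝓞 K) K (d * d) * x := by
    intro x hx
    obtain ⟨c, hc⟩ := hnum x hx
    refine ⟨d * c, ?_⟩
    rw [_root_.map_mul, _root_.map_mul, hc]
    ring
  have hmain : ∀ (N : ℕ) (m : ℤ) (x : K), x ∈ S → TotPos K x →
      ((m : ℚ) = Algebra.trace ℚ K (algebraMap (𝓞 K) K (d * d) * x)) → m.natAbs ≤ N →
      x ∈ RHS := by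
    intro N
    induction N with
    | zero =>
      intro m x hxS hxpos htr hle
      exfalso
      have hpos : 0 < Algebra.trace ℚ K (algebraMap (𝓞 K) K (d * d) * x) :=
        totPos_trace_pos hreal (hddpos hxpos)
      rw [← htr] at hpos
      have hm0 : m = 0 := by omega
      rw [hm0] at hpos
      norm_num at hpos
    | succ N ih =>
      intro m x hxS hxpos htr hle
      by_cases hind : Indec K S x
      · exact hindecR x hind
      · have hex : ∃ β γ : K, β ∈ S ∧ γ ∈ S ∧ TotPos K β ∧ TotPos K γ ∧ x = β + γ := by
          by_contra hno
          exact hind ⟨hxS, hxpos, hno⟩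
        obtain ⟨β, γ, hβS, hγS, hβp, hγp, hxe⟩ := hex
        obtain ⟨c1, hc1⟩ := hnum2 β hβS
        obtain ⟨c2, hc2⟩ := hnum2 γ hγS
        obtain ⟨m1, hm1⟩ := trace_integer c1
        obtain ⟨m2, hm2⟩ := trace_integer c2
        rw [hc1] at hm1
        rw [hc2] at hm2
        have hm1pos : 0 < m1 := by
          have h := totPos_trace_pos hreal (hddpos hβp)
          rw [← hm1] at h
          exact_mod_cast h
        have hm2pos : 0 < m2 := by
          have h := totPos_trace_pos hreal (hddpos hγp)
          rw [← hm2] at h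
          exact_mod_cast h
        have hsum : m = m1 + m2 := by
          have h1 : ((m1 + m2 : ℤ) : ℚ) = (m : ℚ) := by
            push_cast
            rw [hm1, hm2, htr, hxe, mul_add, map_add]
          exact_mod_cast h1.symm
        have h1le : m1.natAbs ≤ N := by omega
        have h2le : m2.natAbs ≤ N := by omega
        exact hxe ▸ hRadd (ih m1 β hβS hβp hm1 h1le) (ih m2 γ hγS hγp hm2 h2le)
  have hEq : IdealPos K S = RHS := by
    apply Set.Subset.antisymm
    · rintro x ⟨hxS, hx0 | hxpos⟩
      · rw [hx0]
        exact hzeroR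
      · obtain ⟨c, hc⟩ := hnum2 x hxS
        obtain ⟨m, hm⟩ := trace_integer c
        rw [hc] at hm
        exact hmain m.natAbs m x hxS hxpos hm le_rfl
    · intro x hx
      rw [hRHS, Set.mem_fintype_sum] at hx
      obtain ⟨t, ht, rfl⟩ := hx
      have hti : ∀ i, t i ∈ S ∧ (t i = 0 ∨ TotPos K (t i)) := by
        intro i
        obtain ⟨z, ⟨⟨c, hcz⟩, hz⟩, hzv⟩ := ht i
        have htiv : t i = g i * z := hzv.symm
        constructor
        · rw [htiv, ← hcz, mul_comm, ← Algebra.smul_def]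
          exact Submodule.smul_mem _ c (hgind i).1
        · rcases hz with rfl | hz
          · exact Or.inl (by rw [htiv, mul_zero])
          · exact Or.inr (htiv ▸ totPos_mul (hgind i).2.1 hz)
      refine ⟨Submodule.sum_mem _ (fun i _ => (hti i).1), ?_⟩
      by_cases hall : ∀ i, t i = 0
      · exact Or.inl (Finset.sum_eq_zero (fun i _ => hall i))
      · push_neg at hall
        obtain ⟨i0, hi0⟩ := hall
        refine Or.inr (fun φ => ?_)
        rw [map_sum]
        refine Finset.sum_pos' (fun i _ => ?_) ⟨i0, Finset.mem_univ i0, ?_⟩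
        · rcases (hti i).2 with h | h
          · rw [h, map_zero]
          · exact (h φ).le
        · rcases (hti i0).2 with h | h
          · exact absurd h hi0
          · exact h φ
  rw [kappa]
  refine sInf_le ?_
  exact ⟨n, ⟨g, fun i => (hgind i).2.1, hEq⟩, rfl⟩
end

section
/- In K = ℚ(√3), let I = (α) where α ∈ O_K satisfies α > 0 and α' < 0 (α' the Galois conjugate). Then there is no single totally positive α⁺ ∈ K with I^+ = α⁺·O_K^{+,0} \ {0}; i.e., κ(I) ≥ 2. -/
open NumberField Pointwise nonZeroDivisors

/-- Every element of `ℚ(√3)` is `a + b√3`. -/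
theorem sqrt3_repr (K : Type*) [Field K] [NumberField K]
    (hdeg : Module.finrank ℚ K = 2)
    (sq3 : K) (hsq3 : sq3 ^ 2 = 3)
    (σ : K ≃ₐ[ℚ] K) (hσ : σ sq3 = -sq3) :
    ∀ x : K, ∃ a b : ℚ, x = (a : K) + (b : K) * sq3 := by
  have hs0 : sq3 ≠ 0 := by
    intro h; rw [h] at hsq3; norm_num at hsq3
  have hsm : ∀ (q : ℚ) (x : K), q • x = (q : K) * x := fun q x => by
    rw [Algebra.smul_def, eq_ratCast]
  have hindep : LinearIndependent ℚ ![(1 : K), sq3] := by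
    rw [LinearIndependent.pair_iff]
    intro s t hst
    rw [hsm, hsm, mul_one] at hst
    have h2 : σ ((s : K) + (t : K) * sq3) = 0 := by rw [hst, map_zero]
    rw [map_add, map_mul, map_ratCast, map_ratCast, hσ] at h2
    have hs : (s : K) = 0 := by linear_combination hst / 2 + h2 / 2
    have ht : (t : K) = 0 := by
      rcases mul_eq_zero.mp (show (t:K) * sq3 = 0 by linear_combination hst - hs) with h | h
      · exact h
      · exact absurd h hs0
    exact ⟨by exact_mod_cast hs, by exact_mod_cast ht⟩
  have hcard : Fintype.card (Fin 2) = Module.finrank ℚ K := by simp [hdeg]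
  have hspan : Submodule.span ℚ (Set.range ![(1:K), sq3]) = ⊤ := by
    have := (basisOfLinearIndependentOfCardEqFinrank hindep hcard).span_eq
    rwa [coe_basisOfLinearIndependentOfCardEqFinrank] at this
  intro x
  have hx : x ∈ Submodule.span ℚ (Set.range ![(1:K), sq3]) := by
    rw [hspan]; trivial
  rw [show Set.range ![(1:K), sq3] = {(1:K), sq3} by
    simp [Matrix.range_cons, Matrix.range_empty, Set.pair_comm]] at hx
  obtain ⟨a, b, hab⟩ := Submodule.mem_span_pair.mp hx
  exact ⟨a, b, by rw [← hab, hsm, hsm, mul_one]⟩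

theorem int_eq_of_rat_isIntegral (K : Type*) [Field K] [NumberField K]
    (q : ℚ) (h : IsIntegral ℤ ((q : K))) : ∃ m : ℤ, (m : ℚ) = q := by
  rw [show ((q : K)) = algebraMap ℚ K q from (eq_ratCast _ q).symm] at h
  rw [isIntegral_algebraMap_iff (algebraMap ℚ K).injective] at h
  obtain ⟨m, hm⟩ := IsIntegrallyClosed.isIntegral_iff.mp h
  exact ⟨m, hm⟩

theorem no_unit_norm_neg_one : ∀ u v : ℤ, v ^ 2 ≠ 3 * u ^ 2 + 12 := by
  intro u v h
  have h3 : (3:ℤ) ∣ v ^ 2 := ⟨u ^ 2 + 4, by linarith⟩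
  have hv : (3:ℤ) ∣ v := Int.Prime.dvd_pow' (by norm_num) h3
  obtain ⟨w, rfl⟩ := hv
  have h2 : u ^ 2 + 4 = 3 * w ^ 2 := by nlinarith
  have hd : ∀ x y : ZMod 3, x ^ 2 + 4 ≠ 3 * y ^ 2 := by decide
  exact hd u w (by exact_mod_cast congrArg (Int.cast : ℤ → ZMod 3) h2)

set_option maxHeartbeats 1000000 in
/-- In `K = ℚ(√3)`, an ideal generated by an element of mixed signature has `κ(I) ≥ 2`:
its positive part has no single totally positive generator. -/
theorem kappa_ge_two_in_Q_sqrt3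
    (K : Type*) [Field K] [NumberField K]
    (hdeg : Module.finrank ℚ K = 2)
    (sq3 : K) (hsq3 : sq3 ^ 2 = 3)
    (σ : K ≃ₐ[ℚ] K) (hσ : σ sq3 = -sq3)
    (α : 𝓞 K) (hα : α ≠ 0)
    (φ : K →+* ℝ)
    (hpos : 0 < φ (algebraMap (𝓞 K) K α))
    (hneg : φ (σ (algebraMap (𝓞 K) K α)) < 0) :
    2 ≤ kappa K ((fun y => algebraMap (𝓞 K) K y) ''
      ((Ideal.span {α} : Ideal (𝓞 K)) : Set (𝓞 K))) := by
  set A := algebraMap (𝓞 K) K α with hAdef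
  have hA0 : A ≠ 0 := RingOfIntegers.coe_ne_zero_iff.mpr hα
  have hrepr := sqrt3_repr K hdeg sq3 hsq3 σ hσ
  have hσr : ∀ a b : ℚ, σ ((a:K) + (b:K) * sq3) = (a:K) - (b:K) * sq3 := by
    intro a b
    rw [map_add, map_mul, map_ratCast, map_ratCast, hσ]; ring
  have hσσ : ∀ x : K, σ (σ x) = x := by
    intro x; obtain ⟨a, b, rfl⟩ := hrepr x
    rw [hσr, show (a:K) - (b:K)*sq3 = ((a:ℚ):K) + ((-b : ℚ):K) * sq3 by push_cast; ring, hσr]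
    push_cast; ring
  have hemb : ∀ ψ : K →+* ℝ, (∀ x, ψ x = φ x) ∨ (∀ x, ψ x = φ (σ x)) := by
    intro ψ
    have h1 : (ψ sq3) ^ 2 = 3 := by rw [← map_pow, hsq3, map_ofNat]
    have h2 : (φ sq3) ^ 2 = 3 := by rw [← map_pow, hsq3, map_ofNat]
    have h3 : (ψ sq3 - φ sq3) * (ψ sq3 + φ sq3) = 0 := by nlinarith [h1, h2]
    rcases mul_eq_zero.mp h3 with h | h
    · left; intro x
      obtain ⟨a, b, rfl⟩ := hrepr x
      have hs : ψ sq3 = φ sq3 := by linarith [sub_eq_zero.mp h]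
      rw [map_add, map_mul, map_add, map_mul, map_ratCast, map_ratCast, map_ratCast,
        map_ratCast, hs]
    · right; intro x
      obtain ⟨a, b, rfl⟩ := hrepr x
      have hs : ψ sq3 = -φ sq3 := by linarith [h]
      rw [map_add, map_mul, hσr, map_sub, map_mul, map_ratCast, map_ratCast, map_ratCast,
        map_ratCast, hs]
      ring
  have hTot : ∀ x : K, 0 < φ x → 0 < φ (σ x) → TotPos K x := by
    intro x h1 h2 ψ
    rcases hemb ψ with h | h <;> rw [h x] <;> assumption
  have hσint : ∀ x : K, IsIntegral ℤ x → IsIntegral ℤ (σ x) :=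
    fun x hx => hx.map σ.toAlgHom.toRingHom.toIntAlgHom
  have hsq3int : IsIntegral ℤ sq3 :=
    ⟨Polynomial.X ^ 2 - Polynomial.C 3, Polynomial.monic_X_pow_sub_C 3 (by norm_num),
      by simp [hsq3]⟩
  -- the auxiliary elements
  have hBint : IsIntegral ℤ (σ A) := hσint A (RingOfIntegers.isIntegral_coe α)
  obtain ⟨n, hngt⟩ := exists_nat_gt (1 / φ A)
  have hnA : 1 < (n:ℝ) * φ A := by rw [div_lt_iff₀ hpos] at hngt; linarith
  have hnpos : 0 < (n:ℝ) := by nlinarith [hpos, hnA]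
  set β : 𝓞 K := ⟨σ A, hBint⟩ with hβdef
  have hβ : algebraMap (𝓞 K) K β = σ A := rfl
  set τ : 𝓞 K := α * ((n : 𝓞 K) * (-β)) with hτdef
  have hτ : algebraMap (𝓞 K) K τ = A * ((n:K) * (-(σ A))) := by
    rw [hτdef, map_mul, map_mul, map_neg, map_natCast, hβ, hAdef]
  set ρ : 𝓞 K := α * (1 - (n : 𝓞 K) * β) with hρdef
  have hρ : algebraMap (𝓞 K) K ρ = A * (1 - (n:K) * σ A) := by
    rw [hρdef, map_mul, map_sub, map_one, map_mul, map_natCast, hβ, hAdef]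
  have hmemI : ∀ x : 𝓞 K, (algebraMap (𝓞 K) K (α * x)) ∈ (fun y => algebraMap (𝓞 K) K y) ''
      ((Ideal.span {α} : Ideal (𝓞 K)) : Set (𝓞 K)) :=
    fun x => ⟨α * x, Ideal.mem_span_singleton'.mpr ⟨x, mul_comm x α⟩, rfl⟩
  have hφτ : 0 < φ (algebraMap (𝓞 K) K τ) := by
    rw [hτ, map_mul, map_mul, map_neg, map_natCast]
    nlinarith [hpos, hneg, hnpos]
  have hστ : σ (algebraMap (𝓞 K) K τ) = σ A * ((n:K) * (-A)) := by
    rw [hτ, map_mul, map_mul, map_neg, map_natCast, hσσ]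
  have hφστ : 0 < φ (σ (algebraMap (𝓞 K) K τ)) := by
    rw [hστ, map_mul, map_mul, map_neg, map_natCast]
    nlinarith [hpos, hneg, hnpos]
  have hτ0 : algebraMap (𝓞 K) K τ ≠ 0 := by
    intro h; rw [h, map_zero] at hφτ; exact lt_irrefl 0 hφτ
  have hτIdeal : algebraMap (𝓞 K) K τ ∈ IdealPos K ((fun y => algebraMap (𝓞 K) K y) ''
      ((Ideal.span {α} : Ideal (𝓞 K)) : Set (𝓞 K))) :=
    ⟨hmemI _, Or.inr (hTot _ hφτ hφστ)⟩
  have hφρ : 0 < φ (algebraMap (𝓞 K) K ρ) := by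
    rw [hρ, map_mul, map_sub, map_one, map_mul, map_natCast]
    nlinarith [hpos, hneg, hnpos]
  have hσρ : σ (algebraMap (𝓞 K) K ρ) = σ A * (1 - (n:K) * A) := by
    rw [hρ, map_mul, map_sub, map_one, map_mul, map_natCast, hσσ]
  have hφσρ : 0 < φ (σ (algebraMap (𝓞 K) K ρ)) := by
    rw [hσρ, map_mul, map_sub, map_one, map_mul, map_natCast]
    nlinarith [hneg, hnA]
  have hρIdeal : algebraMap (𝓞 K) K ρ ∈ IdealPos K ((fun y => algebraMap (𝓞 K) K y) ''
      ((Ideal.span {α} : Ideal (𝓞 K)) : Set (𝓞 K))) :=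
    ⟨hmemI _, Or.inr (hTot _ hφρ hφσρ)⟩
  have hρτA : algebraMap (𝓞 K) K ρ - algebraMap (𝓞 K) K τ = A := by
    rw [hρ, hτ]; ring
  -- unfold kappa
  rw [kappa]
  refine le_sInf ?_
  rintro b ⟨m, hm, rfl⟩
  have h2m : 2 ≤ m := by
    by_contra hlt
    push_neg at hlt
    interval_cases m
    · -- m = 0 : the positive part would be {0}
      obtain ⟨f, hf, heq⟩ := hm
      rw [Fin.sum_univ_zero] at heq
      rw [heq] at hτIdeal
      exact hτ0 (by simpa using hτIdeal)
    · -- m = 1 : a single totally positive generator p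
      obtain ⟨f, hf, heq⟩ := hm
      rw [Fin.sum_univ_one] at heq
      set p := f 0 with hpdef
      have hpT : TotPos K p := hf 0
      have hφp : 0 < φ p := hpT φ
      have hψp : 0 < φ (σ p) := hpT (φ.comp σ.toAlgHom.toRingHom)
      have h1O : (1:K) ∈ OPos K :=
        ⟨⟨1, map_one _⟩, Or.inr (fun ψ => by rw [map_one]; norm_num)⟩
      have hpIdeal : p ∈ IdealPos K ((fun y => algebraMap (𝓞 K) K y) ''
          ((Ideal.span {α} : Ideal (𝓞 K)) : Set (𝓞 K))) := by
        rw [heq]; exact ⟨1, h1O, mul_one p⟩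
      obtain ⟨γ₀, hγmem, hγeq⟩ := hpIdeal.1
      obtain ⟨c, hc⟩ := Ideal.mem_span_singleton'.mp hγmem
      have hpcA : p = algebraMap (𝓞 K) K c * A := by
        rw [← hγeq, ← hc]
        show algebraMap (𝓞 K) K (c * α) = algebraMap (𝓞 K) K c * A
        rw [map_mul, ← hAdef]
      -- decompose ρ and τ through p·OPos
      rw [heq] at hτIdeal hρIdeal
      obtain ⟨xt, hxtO, hxt⟩ := hτIdeal
      obtain ⟨xs, hxsO, hxs⟩ := hρIdeal
      obtain ⟨βt, hβt⟩ := hxtO.1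
      obtain ⟨βs, hβs⟩ := hxsO.1
      set D : K := algebraMap (𝓞 K) K (βs - βt) with hDdef
      have hAD : A = p * D := by
        rw [hDdef, map_sub, hβs, hβt, ← hρτA, ← hxt, ← hxs]; ring
      set G : K := algebraMap (𝓞 K) K c with hGdef
      have hGD : G * D = 1 := by
        have h := hAD
        rw [hpcA] at h
        have h2 : A * (G * D) = A * 1 := by rw [mul_one]; linear_combination -h
        exact mul_left_cancel₀ hA0 h2
      clear_value A β τ ρ p D G
      -- signs
      have hφAD : φ A = φ p * φ D := by rw [hAD, map_mul]
      have hψAD : φ (σ A) = φ (σ p) * φ (σ D) := by rw [hAD, map_mul, map_mul]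
      have hφD : 0 < φ D := by nlinarith [hpos, hφp, hφAD]
      have hψD : φ (σ D) < 0 := by nlinarith [hneg, hψp, hψAD]
      have hφGD : φ G * φ D = 1 := by rw [← map_mul, hGD, map_one]
      have hψGD : φ (σ G) * φ (σ D) = 1 := by rw [← map_mul, ← map_mul, hGD, map_one, map_one]
      have hφG : 0 < φ G := by nlinarith [hφD, hφGD]
      have hψG : φ (σ G) < 0 := by nlinarith [hψD, hψGD]
      -- integrality
      have hDint : IsIntegral ℤ D := by
        rw [hDdef]; exact RingOfIntegers.isIntegral_coe (βs - βt)
      have hGint : IsIntegral ℤ G := by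
        rw [hGdef]; exact RingOfIntegers.isIntegral_coe c
      -- norms are rational integers
      obtain ⟨a, b, hDr⟩ := hrepr D
      obtain ⟨a', b', hGr⟩ := hrepr G
      have hnD : D * σ D = (((a^2 - 3*b^2 : ℚ)) : K) := by
        rw [hDr, hσr]; push_cast; linear_combination (-(b:K)^2) * hsq3
      have hnG : G * σ G = (((a'^2 - 3*b'^2 : ℚ)) : K) := by
        rw [hGr, hσr]; push_cast; linear_combination (-(b':K)^2) * hsq3
      obtain ⟨mD, hmD⟩ := int_eq_of_rat_isIntegral K (a^2 - 3*b^2)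
        (by rw [hnD.symm]; exact hDint.mul (hσint D hDint))
      obtain ⟨mG, hmG⟩ := int_eq_of_rat_isIntegral K (a'^2 - 3*b'^2)
        (by rw [hnG.symm]; exact hGint.mul (hσint G hGint))
      -- norms are negative
      have hφnD : φ (D * σ D) < 0 := by rw [map_mul]; nlinarith [hφD, hψD]
      have hφnG : φ (G * σ G) < 0 := by rw [map_mul]; nlinarith [hφG, hψG]
      have hqD : (a^2 - 3*b^2 : ℚ) < 0 := by
        rw [hnD, map_ratCast] at hφnD; exact_mod_cast hφnD
      have hqG : (a'^2 - 3*b'^2 : ℚ) < 0 := by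
        rw [hnG, map_ratCast] at hφnG; exact_mod_cast hφnG
      have hmDneg : mD ≤ -1 := by
        have h0 : (mD:ℚ) < 0 := hmD ▸ hqD
        have h1 : mD < 0 := by exact_mod_cast h0
        omega
      have hmGneg : mG ≤ -1 := by
        have h0 : (mG:ℚ) < 0 := hmG ▸ hqG
        have h1 : mG < 0 := by exact_mod_cast h0
        omega
      -- product of norms is 1
      have hprod : (D * σ D) * (G * σ G) = 1 := by
        have hσGD : σ (G * D) = 1 := by rw [hGD, map_one]
        rw [map_mul] at hσGD
        calc (D * σ D) * (G * σ G) = (G * D) * (σ G * σ D) := by ring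
        _ = 1 := by rw [hGD, hσGD, one_mul]
      have hqprod : ((a^2 - 3*b^2) * (a'^2 - 3*b'^2) : ℚ) = 1 := by
        have hc : (((a^2 - 3*b^2) * (a'^2 - 3*b'^2) : ℚ) : K) = ((1:ℚ):K) := by
          rw [Rat.cast_mul, ← hnD, ← hnG, Rat.cast_one]; exact hprod
        exact_mod_cast hc
      have hmprod : mD * mG = 1 := by
        have hc : ((mD * mG : ℤ) : ℚ) = 1 := by push_cast [hmD, hmG]; exact_mod_cast hqprod
        exact_mod_cast hc
      have hmD1 : mD = -1 := by
        rcases Int.mul_eq_one_iff_eq_one_or_neg_one.mp hmprod with ⟨h1, h2⟩ | ⟨h1, h2⟩ <;> omega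
      -- trace and √3-part are integers
      have htr : D + σ D = ((2*a : ℚ) : K) := by
        rw [hDr, hσr]; push_cast; ring
      obtain ⟨u, hu⟩ := int_eq_of_rat_isIntegral K (2*a)
        (by rw [← htr]; exact hDint.add (hσint D hDint))
      have h6b : (D - σ D) * sq3 = ((6*b : ℚ) : K) := by
        rw [hDr, hσr]; push_cast; linear_combination (2*(b:K)) * hsq3
      obtain ⟨v, hv⟩ := int_eq_of_rat_isIntegral K (6*b)
        (by rw [← h6b]; exact (hDint.sub (hσint D hDint)).mul hsq3int)
      have hqD1 : (a^2 - 3*b^2 : ℚ) = -1 := by rw [← hmD, hmD1]; norm_num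
      have hfinal : (v:ℚ)^2 = 3*(u:ℚ)^2 + 12 := by
        linear_combination ((v:ℚ) + 6*b) * hv + (-3*((u:ℚ) + 2*a)) * hu + (-12) * hqD1
      exact no_unit_norm_neg_one u v (by exact_mod_cast hfinal)
  exact_mod_cast h2m
end
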